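/- The octonion norm is multiplicative: for all octonions o₁ and o₂, |o₁o₂| = |o₁|·|o₂|. -/

import Mathlib

noncomputable section

/-- The quaternions over ℝ. -/
abbrev Quat : Type := Quaternion ℝ

/-- Octonions realized as pairs of quaternions (Cayley–Dickson doubling). -/
abbrev Octo : Type := Quat × Quat

/-- Cayley–Dickson multiplication: (a,b)(c,d) = (ac − d̄b, da + bc̄). -/
def omul (x y : Octo) : Octo :=
  (x.1 * y.1 - star y.2 * x.2, y.2 * x.1 + x.2 * star y.1)

/-- The octonion unit μ₄ = (0,1). -/
def oμ₄ : Octo := ((0 : Quat), (1 : Quat))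

/-- The octonion norm: |(a,b)| = √(‖a‖² + ‖b‖²). -/
def onorm (x : Octo) : ℝ := Real.sqrt (‖x.1‖ ^ 2 + ‖x.2‖ ^ 2)


private lemma key_sq (a b c d : Quat) :
    ‖a*c - star d * b‖^2 + ‖d*a + b*star c‖^2 = (‖a‖^2+‖b‖^2)*(‖c‖^2+‖d‖^2) := by
  simp only [sq, ← Quaternion.normSq_eq_norm_mul_self]
  simp only [Quaternion.normSq_def', Quaternion.re_mul,
    Quaternion.imI_mul, Quaternion.imJ_mul, Quaternion.imK_mul, Quaternion.re_sub,
    Quaternion.imI_sub, Quaternion.imJ_sub, Quaternion.imK_sub, Quaternion.re_add,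
    Quaternion.imI_add, Quaternion.imJ_add, Quaternion.imK_add, Quaternion.re_star,
    Quaternion.imI_star, Quaternion.imJ_star, Quaternion.imK_star]
  ring

/-- The octonion norm is multiplicative: |o₁o₂| = |o₁||o₂|. -/
theorem stmt7 (o₁ o₂ : Octo) : onorm (omul o₁ o₂) = onorm o₁ * onorm o₂ := by
  unfold onorm omul
  rw [key_sq, Real.sqrt_mul (by positivity)]
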